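/- In the graph G_3^{μ,υ}(X) (tripartite on U, Y, W each of size n/3), the number of triangles equals (n/3) · |{(i,j) : μ_i = 1, υ_j = 1, X_{i,j} = 1}|. -/

import Mathlib

/-- The gadget graph `G_k^{μ,υ}(X)` with vertex parts `U`, `Y`, `W_1, …, W_{k−2}`, each of
size `m = n/3`. Vertices: `inl i = u_i`, `inr (inl j) = y_j`, `inr (inr (p, j)) = w_{p,j}`. -/
def gadget (k m : ℕ) (μ υ : Fin m → Bool) (X : Fin m → Fin m → Bool) :
    SimpleGraph (Fin m ⊕ Fin m ⊕ Fin (k - 2) × Fin m) where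
  Adj a b :=
    match a, b with
    | .inl i, .inr (.inl j) => X i j = true
    | .inr (.inl j), .inl i => X i j = true
    | .inl i, .inr (.inr _) => μ i = true
    | .inr (.inr _), .inl i => μ i = true
    | .inr (.inl i), .inr (.inr _) => υ i = true
    | .inr (.inr _), .inr (.inl i) => υ i = true
    | .inr (.inr (p, _)), .inr (.inr (q, _)) => p ≠ q
    | _, _ => False
  symm := by
    constructor
    rintro (i | j | ⟨p, w⟩) (i' | j' | ⟨p', w'⟩) h <;> simp_all <;> exact Ne.symm h
  loopless := by
    constructor
    rintro (i | j | ⟨p, w⟩) h <;> simp_all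

/-- In the tripartite graph `G_3^{μ,υ}(X)` on parts `U`, `Y`, `W` of size `m = n/3`,
the number of triangles equals `m · |{(i,j) : μ_i = 1, υ_j = 1, X_{i,j} = 1}|`. -/
theorem stmt11 (m : ℕ) (μ υ : Fin m → Bool) (X : Fin m → Fin m → Bool) :
    Nat.card {S : Finset (Fin m ⊕ Fin m ⊕ Fin (3 - 2) × Fin m) //
        (gadget 3 m μ υ X).IsNClique 3 S} =
      m * Nat.card {ij : Fin m × Fin m //
          μ ij.1 = true ∧ υ ij.2 = true ∧ X ij.1 ij.2 = true} := by
  classical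
  have key : Nat.card {S : Finset (Fin m ⊕ Fin m ⊕ Fin (3 - 2) × Fin m) //
        (gadget 3 m μ υ X).IsNClique 3 S} =
      Nat.card (Fin m × {ij : Fin m × Fin m //
          μ ij.1 = true ∧ υ ij.2 = true ∧ X ij.1 ij.2 = true}) := by
    have hcl : ∀ (p : Fin m × {ij : Fin m × Fin m //
          μ ij.1 = true ∧ υ ij.2 = true ∧ X ij.1 ij.2 = true}),
        (gadget 3 m μ υ X).IsNClique 3
          ({Sum.inl p.2.1.1, Sum.inr (Sum.inl p.2.1.2),
            Sum.inr (Sum.inr ((0 : Fin (3-2)), p.1))} :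
            Finset (Fin m ⊕ Fin m ⊕ Fin (3 - 2) × Fin m)) := by
      intro p
      rw [SimpleGraph.is3Clique_triple_iff]
      exact ⟨p.2.2.2.2, p.2.2.1, p.2.2.2.1⟩
    refine Nat.card_congr (Equiv.ofBijective
      (fun p => ⟨({Sum.inl p.2.1.1, Sum.inr (Sum.inl p.2.1.2),
        Sum.inr (Sum.inr ((0 : Fin (3-2)), p.1))} :
        Finset (Fin m ⊕ Fin m ⊕ Fin (3 - 2) × Fin m)), hcl p⟩) ⟨?_, ?_⟩).symm
    · intro p q h
      simp only [Subtype.mk.injEq, Finset.ext_iff] at h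
      have h1 := (h (Sum.inl p.2.1.1)).1 (by simp)
      have h2 := (h (Sum.inr (Sum.inl p.2.1.2))).1 (by simp)
      have h3 := (h (Sum.inr (Sum.inr ((0 : Fin (3-2)), p.1)))).1 (by simp)
      simp only [Finset.mem_insert, Finset.mem_singleton, Sum.inl.injEq, Sum.inr.injEq,
        Prod.mk.injEq, reduceCtorEq, or_false, false_or] at h1 h2 h3
      obtain ⟨w, ⟨⟨i, j⟩, hp⟩⟩ := p
      obtain ⟨w', ⟨⟨i', j'⟩, hq⟩⟩ := q
      simp_all
    · rintro ⟨S, hS⟩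
      rw [SimpleGraph.is3Clique_iff] at hS
      obtain ⟨a, b, c, hab, hac, hbc, rfl⟩ := hS
      rcases a with i | j | ⟨p, w⟩ <;> rcases b with i' | j' | ⟨p', w'⟩ <;>
        rcases c with i'' | j'' | ⟨p'', w''⟩ <;>
        simp only [gadget, ne_eq] at hab hac hbc <;>
        first
        | exact hab.elim
        | exact hac.elim
        | exact hbc.elim
        | exact absurd (Subsingleton.elim (α := Fin 1) _ _) hab
        | exact absurd (Subsingleton.elim (α := Fin 1) _ _) hac
        | exact absurd (Subsingleton.elim (α := Fin 1) _ _) hbc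
        | (exact ⟨⟨w'', ⟨(i, j'), hac, hbc, hab⟩⟩, Subtype.ext (by
            obtain rfl : (0 : Fin (3-2)) = p'' := Subsingleton.elim (α := Fin 1) _ _
            ext x; simp; try tauto)⟩)
        | (exact ⟨⟨w', ⟨(i, j''), hab, hbc, hac⟩⟩, Subtype.ext (by
            obtain rfl : (0 : Fin (3-2)) = p' := Subsingleton.elim (α := Fin 1) _ _
            ext x; simp; try tauto)⟩)
        | (exact ⟨⟨w'', ⟨(i', j), hbc, hac, hab⟩⟩, Subtype.ext (by
            obtain rfl : (0 : Fin (3-2)) = p'' := Subsingleton.elim (α := Fin 1) _ _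
            ext x; simp; try tauto)⟩)
        | (exact ⟨⟨w', ⟨(i'', j), hbc, hab, hac⟩⟩, Subtype.ext (by
            obtain rfl : (0 : Fin (3-2)) = p' := Subsingleton.elim (α := Fin 1) _ _
            ext x; simp; try tauto)⟩)
        | (exact ⟨⟨w, ⟨(i', j''), hab, hac, hbc⟩⟩, Subtype.ext (by
            obtain rfl : (0 : Fin (3-2)) = p := Subsingleton.elim (α := Fin 1) _ _
            ext x; simp; try tauto)⟩)
        | (exact ⟨⟨w, ⟨(i'', j'), hac, hab, hbc⟩⟩, Subtype.ext (by
            obtain rfl : (0 : Fin (3-2)) = p := Subsingleton.elim (α := Fin 1) _ _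
            ext x; simp; try tauto)⟩)
  rw [key, Nat.card_prod, Nat.card_eq_fintype_card (α := Fin m), Fintype.card_fin]
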